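/- Let S be a commutative semiring and M a uniformly finitely presented S-semimodule, i.e., there exist n ∈ ℕ and a surjective S-linear map g : S^n → M that is k-uniform (whenever g(x) = g(y) there exist k, k' with g(k) = 0 = g(k') and x + k = y + k') and whose kernel submodule {x ∈ S^n | g(x) = 0} is finitely generated. Then for every index set Λ and every family {L_λ}_{λ∈Λ} of S-semimodules, the canonical S-linear map φ_M : M ⊗_S (∏_{λ∈Λ} L_λ) → ∏_{λ∈Λ} (M ⊗_S L_λ), m ⊗ (l_λ)_λ ↦ (m ⊗ l_λ)_λ, is bijective. -/

import Mathlib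

/-!
STATEMENT 1: Over a commutative semiring `S`, if `M` is a uniformly finitely
presented `S`-semimodule (there are `n : ℕ` and a surjective `k`-uniform
`S`-linear map `g : Sⁿ → M` whose kernel submodule is finitely generated), then
for every index set `Λ` and family `L : Λ → Type` of `S`-semimodules the
canonical map `φ_M : M ⊗[S] (∀ λ, L λ) →ₗ[S] ∀ λ, M ⊗[S] L λ` is bijective.
-/

open TensorProduct

universe u v w




namespace UFP

variable {S : Type u} [CommSemiring S]

/-- The standard equivalence `Sⁿ ⊗ Q ≃ (Fin n → Q)`. -/
noncomputable def e (S : Type u) [CommSemiring S] (n : ℕ)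
    (Q : Type*) [AddCommMonoid Q] [Module S Q] :
    ((Fin n → S) ⊗[S] Q) ≃ₗ[S] (Fin n → Q) :=
  (TensorProduct.comm S (Fin n → S) Q).trans (TensorProduct.piScalarRight S S Q (Fin n))

@[simp] lemma e_tmul {n : ℕ} {Q : Type*} [AddCommMonoid Q] [Module S Q]
    (x : Fin n → S) (q : Q) :
    e S n Q (x ⊗ₜ q) = fun i => x i • q := by
  simp [e]

lemma e_natural {n : ℕ} {Q Q' : Type*} [AddCommMonoid Q] [Module S Q]
    [AddCommMonoid Q'] [Module S Q'] (ψ : Q →ₗ[S] Q')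
    (u : (Fin n → S) ⊗[S] Q) :
    e S n Q' (LinearMap.lTensor (Fin n → S) ψ u) = fun i => ψ (e S n Q u i) := by
  induction u using TensorProduct.induction_on with
  | zero => funext i; simp
  | tmul x q => simp
  | add a b ha hb =>
    funext i
    simp [map_add, ha, hb]

lemma piRightHom_apply_proj {N : Type*} [AddCommMonoid N] [Module S N]
    {Λ : Type w} {L : Λ → Type w} [∀ l, AddCommMonoid (L l)] [∀ l, Module S (L l)]
    (u : N ⊗[S] (∀ l, L l)) (lam : Λ) :
    piRightHom S S N L u lam = LinearMap.lTensor N (LinearMap.proj lam) u := by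
  induction u using TensorProduct.induction_on with
  | zero => simp
  | tmul x f => simp
  | add a b ha hb => simp [map_add, ha, hb]

lemma piRightHom_fin_bijective (n : ℕ)
    (Λ : Type w) (L : Λ → Type w) [∀ l, AddCommMonoid (L l)] [∀ l, Module S (L l)] :
    Function.Bijective (piRightHom S S (Fin n → S) L) := by
  constructor
  · intro u v huv
    apply (e S n (∀ l, L l)).injective
    funext i
    suffices h : ∀ lam, e S n _ u i lam = e S n _ v i lam by
      exact funext h
    intro lam
    have h1 := e_natural (S := S) (LinearMap.proj lam (φ := L)) u
    have h2 := e_natural (S := S) (LinearMap.proj lam (φ := L)) v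
    have : LinearMap.lTensor (Fin n → S) (LinearMap.proj lam) u
        = LinearMap.lTensor (Fin n → S) (LinearMap.proj lam) v := by
      rw [← piRightHom_apply_proj, ← piRightHom_apply_proj, huv]
    rw [this, h2] at h1
    exact (congrFun h1.symm i)
  · intro f
    refine ⟨(e S n (∀ l, L l)).symm (fun i lam => e S n (L lam) (f lam) i), ?_⟩
    funext lam
    apply (e S n (L lam)).injective
    rw [piRightHom_apply_proj]
    rw [e_natural]
    funext i
    simp
theorem key {n m : ℕ} {M : Type v} [AddCommMonoid M] [Module S M]
    (g : (Fin n → S) →ₗ[S] M) (hgsur : Function.Surjective g)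
    (hgu : ∀ x y : Fin n → S, g x = g y →
      ∃ k k' : Fin n → S, g k = 0 ∧ g k' = 0 ∧ x + k = y + k')
    (h : (Fin m → S) →ₗ[S] (Fin n → S))
    (hker : ∀ z, g z = 0 → ∃ c, h c = z)
    (L : Type w) [AddCommMonoid L] [Module S L]
    (x y : (Fin n → S) ⊗[S] L)
    (hxy : LinearMap.rTensor L g x = LinearMap.rTensor L g y) :
    ∃ c c', x + LinearMap.rTensor L h c = y + LinearMap.rTensor L h c' := by
  classical
  set T := LinearMap.rTensor L h with hT
  let c : AddCon ((Fin n → S) ⊗[S] L) :=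
    { r := fun u v => ∃ a b, u + T a = v + T b
      iseqv := by
        refine ⟨fun u => ⟨0, 0, by simp⟩, ?_, ?_⟩
        · rintro u v ⟨a, b, hab⟩
          exact ⟨b, a, hab.symm⟩
        · rintro u v w ⟨a, b, hab⟩ ⟨a', b', hab'⟩
          refine ⟨a + a', b' + b, ?_⟩
          rw [map_add, map_add]
          calc u + (T a + T a') = (u + T a) + T a' := by abel
            _ = (v + T b) + T a' := by rw [hab]
            _ = (v + T a') + T b := by abel
            _ = (w + T b') + T b := by rw [hab']
            _ = w + (T b' + T b) := by abel
      add' := by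
        rintro u v u' v' ⟨a, b, hab⟩ ⟨a', b', hab'⟩
        refine ⟨a + a', b + b', ?_⟩
        rw [map_add, map_add]
        calc u + u' + (T a + T a') = (u + T a) + (u' + T a') := by abel
          _ = (v + T b) + (v' + T b') := by rw [hab, hab']
          _ = v + v' + (T b + T b') := by abel }
  have hcr : ∀ u v, c u v ↔ ∃ a b, u + T a = v + T b := fun _ _ => Iff.rfl
  -- a section of g
  let σ : M → (Fin n → S) := Function.surjInv hgsur
  have hσ : ∀ mm, g (σ mm) = mm := Function.surjInv_eq hgsur
  -- the basic congruence fact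
  have helper : ∀ (a b : Fin n → S), g a = g b → ∀ l : L,
      ((a ⊗ₜ l : (Fin n → S) ⊗[S] L) : c.Quotient) = ((b ⊗ₜ l : (Fin n → S) ⊗[S] L) : c.Quotient) := by
    intro a b hab l
    rw [AddCon.eq]
    obtain ⟨k, k', hk, hk', heq⟩ := hgu a b hab
    obtain ⟨ck, hck⟩ := hker k hk
    obtain ⟨ck', hck'⟩ := hker k' hk'
    refine ⟨ck ⊗ₜ l, ck' ⊗ₜ l, ?_⟩
    rw [hT, LinearMap.rTensor_tmul, LinearMap.rTensor_tmul, hck, hck',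
      ← add_tmul, ← add_tmul, heq]
  -- the balanced map
  let B : M →+ L →+ c.Quotient :=
    { toFun := fun mm =>
        { toFun := fun l => ((σ mm ⊗ₜ l : (Fin n → S) ⊗[S] L) : c.Quotient)
          map_zero' := by
            show ((σ mm ⊗ₜ (0 : L) : (Fin n → S) ⊗[S] L) : c.Quotient) = 0
            rw [tmul_zero]; rfl
          map_add' := fun l l' => by
            show ((σ mm ⊗ₜ (l + l') : (Fin n → S) ⊗[S] L) : c.Quotient)
              = ((σ mm ⊗ₜ l : (Fin n → S) ⊗[S] L) : c.Quotient)
                + ((σ mm ⊗ₜ l' : (Fin n → S) ⊗[S] L) : c.Quotient)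
            rw [tmul_add]; exact AddCon.coe_add _ _ }
      map_zero' := by
        ext l
        show ((σ 0 ⊗ₜ l : (Fin n → S) ⊗[S] L) : c.Quotient) = 0
        rw [helper (σ 0) 0 (by rw [hσ, map_zero]) l, zero_tmul]
        rfl
      map_add' := fun mm mm' => by
        ext l
        show ((σ (mm + mm') ⊗ₜ l : (Fin n → S) ⊗[S] L) : c.Quotient) = _
        rw [helper (σ (mm + mm')) (σ mm + σ mm') (by rw [hσ, map_add, hσ, hσ]) l, add_tmul]
        exact AddCon.coe_add _ _ }
  have hB : ∀ (r : S) (mm : M) (l : L), B (r • mm) l = B mm (r • l) := by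
    intro r mm l
    show ((σ (r • mm) ⊗ₜ l : (Fin n → S) ⊗[S] L) : c.Quotient) = ((σ mm ⊗ₜ (r • l) : (Fin n → S) ⊗[S] L) : c.Quotient)
    have hst : (σ mm ⊗ₜ (r • l) : (Fin n → S) ⊗[S] L) = (r • σ mm) ⊗ₜ l := (smul_tmul _ _ _).symm
    rw [hst]
    exact helper _ _ (by rw [hσ, map_smul, hσ]) l
  let β : M ⊗[S] L →+ c.Quotient := liftAddHom B hB
  have hβ : ∀ z : (Fin n → S) ⊗[S] L, β (LinearMap.rTensor L g z) = (z : c.Quotient) := by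
    intro z
    induction z using TensorProduct.induction_on with
    | zero => simp
    | tmul a l =>
      rw [LinearMap.rTensor_tmul]
      show ((σ (g a) ⊗ₜ l : (Fin n → S) ⊗[S] L) : c.Quotient) = _
      exact helper _ _ (by rw [hσ]) l
    | add a b ha hb =>
      rw [map_add, map_add, ha, hb]
      exact (AddCon.coe_add _ _).symm
  have hx := hβ x
  rw [hxy, hβ y] at hx
  obtain ⟨a, b, hab⟩ := (c.eq).mp hx
  exact ⟨b, a, hab.symm⟩

/-- rTensor and lTensor commute. -/
lemma rTensor_lTensor_comm {P Q M N : Type*} [AddCommMonoid P] [Module S P]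
    [AddCommMonoid Q] [Module S Q] [AddCommMonoid M] [Module S M]
    [AddCommMonoid N] [Module S N]
    (g : P →ₗ[S] M) (ψ : Q →ₗ[S] N) (u : P ⊗[S] Q) :
    LinearMap.lTensor M ψ (LinearMap.rTensor Q g u)
      = LinearMap.rTensor N g (LinearMap.lTensor P ψ u) := by
  induction u using TensorProduct.induction_on with
  | zero => simp
  | tmul a q => simp
  | add a b ha hb => simp [map_add, ha, hb]

end UFP

open UFP in
theorem piRightHom_bijective_of_uniformly_finitely_presented
    (S : Type u) [CommSemiring S] (M : Type v) [AddCommMonoid M] [Module S M]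
    (hM : ∃ (n : ℕ) (g : (Fin n → S) →ₗ[S] M),
      Function.Surjective g ∧
      (∀ x y : Fin n → S, g x = g y →
        ∃ k k' : Fin n → S, g k = 0 ∧ g k' = 0 ∧ x + k = y + k') ∧
      (LinearMap.ker g).FG) :
    ∀ (Λ : Type w) (L : Λ → Type w)
      [∀ lam, AddCommMonoid (L lam)] [∀ lam, Module S (L lam)],
      Function.Bijective (TensorProduct.piRightHom S S M L) := by
  classical
  obtain ⟨n, g, hgsur, hgu, hfg⟩ := hM
  obtain ⟨m, t, ht⟩ := Submodule.fg_iff_exists_fin_generating_family.mp hfg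
  set h : (Fin m → S) →ₗ[S] (Fin n → S) := Fintype.linearCombination S t with hh_def
  have hrange : LinearMap.range h = LinearMap.ker g := by
    rw [hh_def, Fintype.range_linearCombination, ht]
  have hgh : ∀ c, g (h c) = 0 := by
    intro c
    have : h c ∈ LinearMap.ker g := hrange ▸ LinearMap.mem_range_self h c
    exact LinearMap.mem_ker.mp this
  have hker : ∀ z, g z = 0 → ∃ c, h c = z := by
    intro z hz
    have : z ∈ LinearMap.range h := hrange ▸ LinearMap.mem_ker.mpr hz
    exact this
  intro Λ L _ _
  constructor
  · -- injectivity
    intro u v huv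
    obtain ⟨x, rfl⟩ := LinearMap.rTensor_surjective (∀ lam, L lam) hgsur u
    obtain ⟨y, rfl⟩ := LinearMap.rTensor_surjective (∀ lam, L lam) hgsur v
    have hcomp : ∀ lam : Λ,
        LinearMap.rTensor (L lam) g (LinearMap.lTensor _ (LinearMap.proj lam) x)
          = LinearMap.rTensor (L lam) g (LinearMap.lTensor _ (LinearMap.proj lam) y) := by
      intro lam
      have h1 := congrFun huv lam
      rw [piRightHom_apply_proj, piRightHom_apply_proj,
        rTensor_lTensor_comm, rTensor_lTensor_comm] at h1
      exact h1
    have hex : ∀ lam : Λ, ∃ a b : (Fin m → S) ⊗[S] (L lam),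
        LinearMap.lTensor _ (LinearMap.proj lam) x + LinearMap.rTensor (L lam) h a
          = LinearMap.lTensor _ (LinearMap.proj lam) y + LinearMap.rTensor (L lam) h b :=
      fun lam => key g hgsur hgu h hker (L lam) _ _ (hcomp lam)
    choose a b hab using hex
    obtain ⟨C, hC⟩ := (piRightHom_fin_bijective (S := S) m Λ L).surjective a
    obtain ⟨C', hC'⟩ := (piRightHom_fin_bijective (S := S) m Λ L).surjective b
    have hmain : x + LinearMap.rTensor (∀ lam, L lam) h C
        = y + LinearMap.rTensor (∀ lam, L lam) h C' := by
      apply (piRightHom_fin_bijective (S := S) n Λ L).injective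
      funext lam
      rw [piRightHom_apply_proj, piRightHom_apply_proj, map_add, map_add,
        rTensor_lTensor_comm, rTensor_lTensor_comm]
      have ha : LinearMap.lTensor (Fin m → S) (LinearMap.proj lam) C = a lam := by
        rw [← piRightHom_apply_proj, hC]
      have hb : LinearMap.lTensor (Fin m → S) (LinearMap.proj lam) C' = b lam := by
        rw [← piRightHom_apply_proj, hC']
      rw [ha, hb]
      exact hab lam
    have hgh0 : g.comp h = 0 := by
      apply LinearMap.ext; intro c
      simpa using hgh c
    have := congrArg (LinearMap.rTensor (∀ lam, L lam) g) hmain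
    rw [map_add, map_add, ← LinearMap.rTensor_comp_apply, ← LinearMap.rTensor_comp_apply,
      hgh0] at this
    simpa using this
  · -- surjectivity
    intro f
    have hex : ∀ lam : Λ, ∃ z : (Fin n → S) ⊗[S] (L lam),
        LinearMap.rTensor (L lam) g z = f lam :=
      fun lam => LinearMap.rTensor_surjective (L lam) hgsur (f lam)
    choose z hz using hex
    obtain ⟨u, hu⟩ := (piRightHom_fin_bijective (S := S) n Λ L).surjective z
    refine ⟨LinearMap.rTensor (∀ lam, L lam) g u, ?_⟩
    funext lam
    rw [piRightHom_apply_proj, rTensor_lTensor_comm]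
    have : LinearMap.lTensor (Fin n → S) (LinearMap.proj lam) u = z lam := by
      rw [← piRightHom_apply_proj, hu]
    rw [this, hz]
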